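/- arXiv:1506.05728 — 2 statements merged into one kernel-verified Lean document; each statement's English description precedes it below -/
import Mathlib

section
/- Define the relativization φ[n] of a CLTL formula φ at rank n recursively by: a[n]=a, (¬a)[n]=¬a, (Xφ)[n]=X(φ[n]), (φ₁⋈φ₂)[n]=φ₁[n]⋈φ₂[n] for ⋈∈{∨,∧,U,R}, and for LTL formulas φ₁,φ₂: (φ₁ U≤ φ₂)[0]=φ₁ U φ₂ and (φ₁ U≤ φ₂)[n+1]=(φ₁ ∨ X((φ₁ U≤ φ₂)[n])) U φ₂; in the general case (φ₁ U≤ φ₂)[n]=(φ₁[n] U≤ φ₂[n])[n]. Then for every infinite word u and natural number n, u satisfies the LTL formula φ[n] if and only if ⟦φ⟧(u) ≤ n. -/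
open scoped Classical

/-- Cost LTL formulas (in negative normal form), including both the
`U≤` operator (`uleq`) of CLTL≤ and the dual `R>` operator (`rgt`) of CLTL>. -/
inductive CLTL (AP : Type) : Type where
  | pos (a : AP)
  | neg (a : AP)
  | disj (φ ψ : CLTL AP)
  | conj (φ ψ : CLTL AP)
  | untl (φ ψ : CLTL AP)
  | rels (φ ψ : CLTL AP)
  | next (φ : CLTL AP)
  | uleq (φ ψ : CLTL AP)
  | rgt (φ ψ : CLTL AP)

/-- The suffix `u^i` of an infinite word. -/
def shift {AP : Type} (u : ℕ → Set AP) (i : ℕ) : ℕ → Set AP := fun k => u (i + k)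

/-- The quantitative satisfaction relation `(u,n) ⊨ φ`. -/
def CLTL.sat {AP : Type} : CLTL AP → (ℕ → Set AP) → ℕ → Prop
  | .pos a, u, _ => a ∈ u 0
  | .neg a, u, _ => a ∉ u 0
  | .disj φ ψ, u, n => φ.sat u n ∨ ψ.sat u n
  | .conj φ ψ, u, n => φ.sat u n ∧ ψ.sat u n
  | .untl φ ψ, u, n => ∃ i, ψ.sat (shift u i) n ∧ ∀ j < i, φ.sat (shift u j) n
  | .rels φ ψ, u, n => ∀ i, ψ.sat (shift u i) n ∨ ∃ j < i, φ.sat (shift u j) n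
  | .next φ, u, n => φ.sat (shift u 1) n
  | .uleq φ ψ, u, n => ∃ i, ψ.sat (shift u i) n ∧
      ((Finset.range i).filter (fun j => ¬ φ.sat (shift u j) n)).card ≤ n
  | .rgt φ ψ, u, n => ∀ i, ψ.sat (shift u i) n ∨
      n < ((Finset.range i).filter (fun j => φ.sat (shift u j) n)).card

/-- `φ` contains no occurrence of `R>`, i.e. `φ` is a CLTL≤ formula. -/
def CLTL.noRgt {AP : Type} : CLTL AP → Prop
  | .pos _ => True
  | .neg _ => True
  | .disj φ ψ => φ.noRgt ∧ ψ.noRgt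
  | .conj φ ψ => φ.noRgt ∧ ψ.noRgt
  | .untl φ ψ => φ.noRgt ∧ ψ.noRgt
  | .rels φ ψ => φ.noRgt ∧ ψ.noRgt
  | .next φ => φ.noRgt
  | .uleq φ ψ => φ.noRgt ∧ ψ.noRgt
  | .rgt _ _ => False

/-- `φ` contains no occurrence of `U≤`, i.e. `φ` is a CLTL> formula. -/
def CLTL.noUleq {AP : Type} : CLTL AP → Prop
  | .pos _ => True
  | .neg _ => True
  | .disj φ ψ => φ.noUleq ∧ ψ.noUleq
  | .conj φ ψ => φ.noUleq ∧ ψ.noUleq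
  | .untl φ ψ => φ.noUleq ∧ ψ.noUleq
  | .rels φ ψ => φ.noUleq ∧ ψ.noUleq
  | .next φ => φ.noUleq
  | .uleq _ _ => False
  | .rgt φ ψ => φ.noUleq ∧ ψ.noUleq

/-- `φ` is a pure LTL formula (in NNF): no `U≤` and no `R>`. -/
def CLTL.isLTL {AP : Type} (φ : CLTL AP) : Prop := φ.noRgt ∧ φ.noUleq

/-- `⟦φ⟧_inf(u) = inf { n | (u,n) ⊨ φ }`, with `inf ∅ = ∞`. -/
noncomputable def CLTL.semInf {AP : Type} (φ : CLTL AP) (u : ℕ → Set AP) : ℕ∞ :=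
  sInf {m : ℕ∞ | ∃ n : ℕ, m = n ∧ φ.sat u n}

/-- `⟦φ⟧_sup(u) = sup { n | (u,n) ⊨ φ }`, with `sup ∅ = 0`. -/
noncomputable def CLTL.semSup {AP : Type} (φ : CLTL AP) (u : ℕ → Set AP) : ℕ∞ :=
  sSup {m : ℕ∞ | ∃ n : ℕ, m = n ∧ φ.sat u n}

/-- Satisfaction of an LTL formula (the parameter `n` is irrelevant for LTL). -/
def CLTL.ltlSat {AP : Type} (φ : CLTL AP) (u : ℕ → Set AP) : Prop := φ.sat u 0

/-- Syntactic negation: dualize every operator and negate the literals. -/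
def CLTL.negate {AP : Type} : CLTL AP → CLTL AP
  | .pos a => .neg a
  | .neg a => .pos a
  | .disj φ ψ => .conj φ.negate ψ.negate
  | .conj φ ψ => .disj φ.negate ψ.negate
  | .untl φ ψ => .rels φ.negate ψ.negate
  | .rels φ ψ => .untl φ.negate ψ.negate
  | .next φ => .next φ.negate
  | .uleq φ ψ => .rgt φ.negate ψ.negate
  | .rgt φ ψ => .uleq φ.negate ψ.negate

/-- Unfolding of `φ₁ U≤ φ₂` at rank `n`:
`(φ₁ U≤ φ₂)[0] = φ₁ U φ₂`, `(φ₁ U≤ φ₂)[n+1] = (φ₁ ∨ X((φ₁ U≤ φ₂)[n])) U φ₂`. -/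
def CLTL.unfoldU {AP : Type} (φ ψ : CLTL AP) : ℕ → CLTL AP
  | 0 => .untl φ ψ
  | n + 1 => .untl (.disj φ (.next (CLTL.unfoldU φ ψ n))) ψ

/-- Relativization `φ[n]` of a CLTL≤ formula, producing an LTL formula. -/
def CLTL.rel {AP : Type} (n : ℕ) : CLTL AP → CLTL AP
  | .pos a => .pos a
  | .neg a => .neg a
  | .disj φ ψ => .disj (φ.rel n) (ψ.rel n)
  | .conj φ ψ => .conj (φ.rel n) (ψ.rel n)
  | .untl φ ψ => .untl (φ.rel n) (ψ.rel n)
  | .rels φ ψ => .rels (φ.rel n) (ψ.rel n)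
  | .next φ => .next (φ.rel n)
  | .uleq φ ψ => CLTL.unfoldU (φ.rel n) (ψ.rel n) n
  | .rgt φ ψ => .rgt (φ.rel n) (ψ.rel n)

/-- Relativization `φ[n] = ¬((¬φ)[n])` of a CLTL> formula. -/
def CLTL.relGt {AP : Type} (n : ℕ) (φ : CLTL AP) : CLTL AP :=
  (CLTL.rel n φ.negate).negate

lemma shift_shift {AP : Type} (u : ℕ → Set AP) (a b : ℕ) :
    shift (shift u a) b = shift u (a + b) := by
  funext k; simp [shift, Nat.add_assoc]

lemma count_shift (p : ℕ → Prop) [DecidablePred p] (a m : ℕ) :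
    ((Finset.range m).filter (fun k => p (a + k))).card
      = ((Finset.Ico a (a + m)).filter p).card := by
  apply Finset.card_bij (fun k _ => a + k)
  · intro k hk
    simp only [Finset.mem_filter, Finset.mem_range] at hk
    simp only [Finset.mem_filter, Finset.mem_Ico]
    exact ⟨⟨by omega, by omega⟩, hk.2⟩
  · intro k₁ h₁ k₂ h₂ h; omega
  · intro b hb
    simp only [Finset.mem_filter, Finset.mem_Ico] at hb
    refine ⟨b - a, ?_, by omega⟩
    simp only [Finset.mem_filter, Finset.mem_range]
    have hb' : a + (b - a) = b := by omega
    rw [hb']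
    exact ⟨by omega, hb.2⟩

lemma count_split (p : ℕ → Prop) [DecidablePred p] (a i : ℕ) (h : a ≤ i) :
    ((Finset.range i).filter p).card
      = ((Finset.range a).filter p).card + ((Finset.Ico a i).filter p).card := by
  have hr : Finset.range i = Finset.range a ∪ Finset.Ico a i := by
    rw [Finset.range_eq_Ico, Finset.range_eq_Ico]
    exact (Finset.Ico_union_Ico_eq_Ico (Nat.zero_le a) h).symm
  rw [hr, Finset.filter_union, Finset.card_union_of_disjoint]
  exact Finset.disjoint_filter_filter
    (by rw [Finset.range_eq_Ico]; exact Finset.Ico_disjoint_Ico_consecutive 0 a i)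

lemma CLTL.sat_mono {AP : Type} (φ : CLTL AP) (hφ : φ.noRgt) :
    ∀ (u : ℕ → Set AP) (m n : ℕ), m ≤ n → φ.sat u m → φ.sat u n := by
  induction φ with
  | pos a => intro u m n _ h; exact h
  | neg a => intro u m n _ h; exact h
  | disj φ ψ ih1 ih2 =>
    intro u m n hmn h
    exact h.imp (ih1 hφ.1 _ m n hmn) (ih2 hφ.2 _ m n hmn)
  | conj φ ψ ih1 ih2 =>
    intro u m n hmn h
    exact ⟨ih1 hφ.1 _ m n hmn h.1, ih2 hφ.2 _ m n hmn h.2⟩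
  | untl φ ψ ih1 ih2 =>
    rintro u m n hmn ⟨i, h1, h2⟩
    exact ⟨i, ih2 hφ.2 _ m n hmn h1, fun j hj => ih1 hφ.1 _ m n hmn (h2 j hj)⟩
  | rels φ ψ ih1 ih2 =>
    intro u m n hmn h i
    exact (h i).imp (ih2 hφ.2 _ m n hmn)
      (fun ⟨j, hj, hs⟩ => ⟨j, hj, ih1 hφ.1 _ m n hmn hs⟩)
  | next φ ih =>
    intro u m n hmn h; exact ih hφ _ m n hmn h
  | uleq φ ψ ih1 ih2 =>
    rintro u m n hmn ⟨i, h1, h2⟩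
    refine ⟨i, ih2 hφ.2 _ m n hmn h1, le_trans (le_trans (Finset.card_le_card ?_) h2) hmn⟩
    intro j hj
    simp only [Finset.mem_filter, Finset.mem_range] at hj ⊢
    exact ⟨hj.1, fun hs => hj.2 (ih1 hφ.1 _ m n hmn hs)⟩
  | rgt φ ψ ih1 ih2 => exact absurd hφ (by simp [CLTL.noRgt])

lemma CLTL.unfoldU_sat {AP : Type} (φ ψ : CLTL AP) :
    ∀ (n : ℕ) (u : ℕ → Set AP), (CLTL.unfoldU φ ψ n).sat u 0 ↔
      ∃ i, ψ.sat (shift u i) 0 ∧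
        ((Finset.range i).filter (fun j => ¬ φ.sat (shift u j) 0)).card ≤ n := by
  intro n
  induction n with
  | zero =>
    intro u
    simp only [CLTL.unfoldU, CLTL.sat, Nat.le_zero, Finset.card_eq_zero,
      Finset.filter_eq_empty_iff, Finset.mem_range, not_not]
  | succ n ih =>
    intro u
    simp only [CLTL.unfoldU, CLTL.sat]
    constructor
    · rintro ⟨i, h1, h2⟩
      by_cases hall : ∀ j < i, φ.sat (shift u j) 0
      · refine ⟨i, h1, ?_⟩
        have : ((Finset.range i).filter (fun j => ¬ φ.sat (shift u j) 0)) = ∅ := by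
          rw [Finset.filter_eq_empty_iff]
          intro j hj
          simp only [not_not]
          exact hall j (Finset.mem_range.mp hj)
        simp [this]
      · push_neg at hall
        have hex : ∃ j, j < i ∧ ¬ φ.sat (shift u j) 0 := hall
        classical
        let j₀ := Nat.find hex
        obtain ⟨hj₀i, hj₀⟩ := Nat.find_spec hex
        have hmin : ∀ j < j₀, φ.sat (shift u j) 0 := by
          intro j hj
          by_contra hc
          exact Nat.find_min hex hj ⟨lt_trans hj hj₀i, hc⟩
        have hnext : (CLTL.unfoldU φ ψ n).sat (shift u (j₀ + 1)) 0 := by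
          rcases h2 j₀ hj₀i with h | h
          · exact absurd h hj₀
          · rwa [shift_shift] at h
        rw [ih] at hnext
        obtain ⟨i', h1', h2'⟩ := hnext
        refine ⟨j₀ + 1 + i', by rwa [← shift_shift], ?_⟩
        rw [count_split (fun j => ¬ φ.sat (shift u j) 0) (j₀ + 1) (j₀ + 1 + i') (by omega)]
        have hc1 : ((Finset.range (j₀ + 1)).filter (fun j => ¬ φ.sat (shift u j) 0)).card = 1 := by
          have : ((Finset.range (j₀ + 1)).filter (fun j => ¬ φ.sat (shift u j) 0)) = {j₀} := by
            ext j
            simp only [Finset.mem_filter, Finset.mem_range, Finset.mem_singleton]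
            constructor
            · rintro ⟨hji, hjn⟩
              by_contra hne
              exact hjn (hmin j (by omega))
            · rintro rfl; exact ⟨by omega, hj₀⟩
          simp [this]
        have hc2 : ((Finset.Ico (j₀ + 1) (j₀ + 1 + i')).filter
            (fun j => ¬ φ.sat (shift u j) 0)).card ≤ n := by
          rw [← count_shift (fun j => ¬ φ.sat (shift u j) 0) (j₀ + 1) i']
          calc ((Finset.range i').filter (fun k => ¬ φ.sat (shift u (j₀ + 1 + k)) 0)).card
              = ((Finset.range i').filter
                  (fun k => ¬ φ.sat (shift (shift u (j₀ + 1)) k) 0)).card := by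
                simp [shift_shift]
            _ ≤ n := h2'
        omega
    · rintro ⟨i, h1, h2⟩
      refine ⟨i, h1, ?_⟩
      intro j hj
      by_cases hφj : φ.sat (shift u j) 0
      · exact Or.inl hφj
      · right
        rw [shift_shift, ih]
        have hwit : ψ.sat (shift (shift u (j + 1)) (i - (j + 1))) 0 := by
          rw [shift_shift]
          have heq : j + 1 + (i - (j + 1)) = i := by omega
          rwa [heq]
        refine ⟨i - (j + 1), hwit, ?_⟩
        have key : ((Finset.range (i - (j + 1))).filter
            (fun k => ¬ φ.sat (shift (shift u (j + 1)) k) 0)).card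
            = ((Finset.Ico (j + 1) i).filter (fun k => ¬ φ.sat (shift u k) 0)).card := by
          have := count_shift (fun k => ¬ φ.sat (shift u k) 0) (j + 1) (i - (j + 1))
          have heq : j + 1 + (i - (j + 1)) = i := by omega
          rw [heq] at this
          rw [← this]
          simp only [shift_shift]
        rw [key]
        have hsplit := count_split (fun k => ¬ φ.sat (shift u k) 0) (j + 1) i (by omega)
        have hj1 : 1 ≤ ((Finset.range (j + 1)).filter (fun k => ¬ φ.sat (shift u k) 0)).card := by
          rw [Nat.succ_le_iff, Finset.card_pos]
          exact ⟨j, by simp [hφj]⟩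
        omega

lemma CLTL.rel_sat {AP : Type} (φ : CLTL AP) (hφ : φ.noRgt) :
    ∀ (u : ℕ → Set AP) (n : ℕ), (φ.rel n).sat u 0 ↔ φ.sat u n := by
  induction φ with
  | pos a => intro u n; rfl
  | neg a => intro u n; rfl
  | disj φ ψ ih1 ih2 =>
    intro u n
    simp only [CLTL.rel, CLTL.sat, ih1 hφ.1, ih2 hφ.2]
  | conj φ ψ ih1 ih2 =>
    intro u n
    simp only [CLTL.rel, CLTL.sat, ih1 hφ.1, ih2 hφ.2]
  | untl φ ψ ih1 ih2 =>
    intro u n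
    simp only [CLTL.rel, CLTL.sat, ih1 hφ.1, ih2 hφ.2]
  | rels φ ψ ih1 ih2 =>
    intro u n
    simp only [CLTL.rel, CLTL.sat, ih1 hφ.1, ih2 hφ.2]
  | next φ ih =>
    intro u n
    simp only [CLTL.rel, CLTL.sat, ih hφ]
  | uleq φ ψ ih1 ih2 =>
    intro u n
    show (CLTL.unfoldU (φ.rel n) (ψ.rel n) n).sat u 0 ↔ _
    rw [CLTL.unfoldU_sat]
    simp only [CLTL.sat]
    apply exists_congr
    intro i
    rw [ih2 hφ.2]
    apply and_congr_right
    intro _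
    rw [show ((Finset.range i).filter (fun j => ¬ (CLTL.rel n φ).sat (shift u j) 0))
        = ((Finset.range i).filter (fun j => ¬ φ.sat (shift u j) n)) by
      apply Finset.filter_congr; intro j _; exact not_congr (ih1 hφ.1 _ _)]
  | rgt φ ψ ih1 ih2 => exact absurd hφ (by simp [CLTL.noRgt])

/-- `u ⊨ φ[n]` iff `⟦φ⟧(u) ≤ n`. -/
theorem cltl_rel_correct {AP : Type} (φ : CLTL AP) (hφ : φ.noRgt)
    (u : ℕ → Set AP) (n : ℕ) :
    (φ.rel n).ltlSat u ↔ φ.semInf u ≤ (n : ℕ∞) := by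
  rw [CLTL.ltlSat, CLTL.rel_sat φ hφ u n]
  constructor
  · intro h
    exact sInf_le ⟨n, rfl, h⟩
  · intro h
    by_contra hn
    have hb : ((n : ℕ∞) + 1) ≤ φ.semInf u := by
      apply le_sInf
      rintro m ⟨k, rfl, hk⟩
      have hk' : ¬ k ≤ n := fun hkn => hn (CLTL.sat_mono φ hφ u k n hkn hk)
      have : n + 1 ≤ k := by omega
      exact_mod_cast this
    have hfin := le_trans hb h
    have : ((n : ℕ∞)) < (n : ℕ∞) + 1 := by
      exact_mod_cast Nat.lt_succ_self n
    exact absurd (le_trans hb h) (by exact_mod_cast Nat.not_succ_le_self n)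
end

section
/- Refinement step of the CEGAR loop: with φ₀ a CLTL> formula, L ⊆ (2^AP)^ω such that sup_{u∈L} ⟦φ₀⟧_sup(u) is finite, and φ = φ₀ ∧ φ₀[n+1] for some n strictly less than sup_L ⟦φ₀⟧_sup: the function u ↦ ⟦φ⟧_sup(u) refines ⟦φ₀⟧_sup relative to L, i.e., sup_L ⟦φ⟧_sup = sup_L ⟦φ₀⟧_sup and every u ∈ L with ⟦φ₀⟧_sup(u) = 0 also has ⟦φ⟧_sup(u) = 0. -/
open scoped Classical

namespace CLTL
variable {AP : Type}

lemma shift_shift (u : ℕ → Set AP) (i j : ℕ) : shift (shift u i) j = shift u (i + j) := by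
  funext k; simp [shift, add_assoc]

lemma sat_negate (φ : CLTL AP) : ∀ u n, φ.negate.sat u n ↔ ¬ φ.sat u n := by
  induction φ with
  | pos a => intro u n; simp [negate, sat]
  | neg a => intro u n; simp [negate, sat]
  | disj φ ψ ihφ ihψ => intro u n; simp [negate, sat, ihφ, ihψ]
  | conj φ ψ ihφ ihψ => intro u n; simp [negate, sat, ihφ, ihψ]; tauto
  | untl φ ψ ihφ ihψ =>
      intro u n; simp only [negate, sat, ihφ, ihψ]; push_neg
      constructor
      · intro h i hi
        rcases h i with h' | h'
        · exact absurd hi h'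
        · exact h'
      · intro h i
        by_cases hi : ψ.sat (shift u i) n
        · exact Or.inr (h i hi)
        · exact Or.inl hi
  | rels φ ψ ihφ ihψ =>
      intro u n; simp only [negate, sat, ihφ, ihψ]; push_neg; rfl
  | next φ ihφ => intro u n; simp [negate, sat, ihφ]
  | uleq φ ψ ihφ ihψ =>
      intro u n; simp only [negate, sat, ihφ, ihψ]; push_neg
      constructor
      · intro h i hi
        rcases h i with h' | h'
        · exact absurd hi h'
        · exact h'
      · intro h i
        by_cases hi : ψ.sat (shift u i) n
        · exact Or.inr (h i hi)
        · exact Or.inl hi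
  | rgt φ ψ ihφ ihψ =>
      intro u n; simp only [negate, sat, ihφ, ihψ]; push_neg; rfl

lemma sat_antitone (φ : CLTL AP) (h : φ.noUleq) : ∀ u m n, m ≤ n → φ.sat u n → φ.sat u m := by
  induction φ with
  | pos a => intro u m n _ hs; exact hs
  | neg a => intro u m n _ hs; exact hs
  | disj φ ψ ihφ ihψ =>
      intro u m n hmn hs
      rcases hs with hs | hs
      · exact Or.inl (ihφ h.1 u m n hmn hs)
      · exact Or.inr (ihψ h.2 u m n hmn hs)
  | conj φ ψ ihφ ihψ =>
      intro u m n hmn hs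
      exact ⟨ihφ h.1 u m n hmn hs.1, ihψ h.2 u m n hmn hs.2⟩
  | untl φ ψ ihφ ihψ =>
      intro u m n hmn ⟨i, hi, hall⟩
      exact ⟨i, ihψ h.2 _ m n hmn hi, fun j hj => ihφ h.1 _ m n hmn (hall j hj)⟩
  | rels φ ψ ihφ ihψ =>
      intro u m n hmn hs i
      rcases hs i with hi | ⟨j, hj, hjs⟩
      · exact Or.inl (ihψ h.2 _ m n hmn hi)
      · exact Or.inr ⟨j, hj, ihφ h.1 _ m n hmn hjs⟩
  | next φ ihφ => intro u m n hmn hs; exact ihφ h _ m n hmn hs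
  | uleq φ ψ ihφ ihψ => exact absurd h (by simp [noUleq])
  | rgt φ ψ ihφ ihψ =>
      intro u m n hmn hs i
      rcases hs i with hi | hc
      · exact Or.inl (ihψ h.2 _ m n hmn hi)
      · refine Or.inr (lt_of_le_of_lt hmn (lt_of_lt_of_le hc ?_))
        exact Finset.card_le_card (Finset.monotone_filter_right _
          (fun j _ hj => ihφ h.1 _ m n hmn hj))

lemma sat_ltl (φ : CLTL AP) (h : φ.isLTL) : ∀ u m m', φ.sat u m → φ.sat u m' := by
  obtain ⟨h1, h2⟩ := h
  induction φ with
  | pos a => intro u m m' hs; exact hs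
  | neg a => intro u m m' hs; exact hs
  | disj φ ψ ihφ ihψ =>
      intro u m m' hs
      rcases hs with hs | hs
      · exact Or.inl (ihφ h1.1 h2.1 u m m' hs)
      · exact Or.inr (ihψ h1.2 h2.2 u m m' hs)
  | conj φ ψ ihφ ihψ =>
      intro u m m' hs
      exact ⟨ihφ h1.1 h2.1 u m m' hs.1, ihψ h1.2 h2.2 u m m' hs.2⟩
  | untl φ ψ ihφ ihψ =>
      intro u m m' ⟨i, hi, hall⟩
      exact ⟨i, ihψ h1.2 h2.2 _ m m' hi, fun j hj => ihφ h1.1 h2.1 _ m m' (hall j hj)⟩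
  | rels φ ψ ihφ ihψ =>
      intro u m m' hs i
      rcases hs i with hi | ⟨j, hj, hjs⟩
      · exact Or.inl (ihψ h1.2 h2.2 _ m m' hi)
      · exact Or.inr ⟨j, hj, ihφ h1.1 h2.1 _ m m' hjs⟩
  | next φ ihφ => intro u m m' hs; exact ihφ h1 h2 _ m m' hs
  | uleq φ ψ ihφ ihψ => exact absurd h2 (by simp [noUleq])
  | rgt φ ψ ihφ ihψ => exact absurd h1 (by simp [noRgt])

lemma negate_noRgt (φ : CLTL AP) (h : φ.noUleq) : φ.negate.noRgt := by
  induction φ <;> simp_all [negate, noUleq, noRgt]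

lemma negate_noUleq (φ : CLTL AP) (h : φ.noRgt) : φ.negate.noUleq := by
  induction φ <;> simp_all [negate, noUleq, noRgt]

lemma unfoldU_isLTL (A B : CLTL AP) (hA : A.isLTL) (hB : B.isLTL) (k : ℕ) :
    (unfoldU A B k).isLTL := by
  induction k with
  | zero => exact ⟨⟨hA.1, hB.1⟩, ⟨hA.2, hB.2⟩⟩
  | succ k ih =>
      exact ⟨⟨⟨hA.1, ih.1⟩, hB.1⟩, ⟨⟨hA.2, ih.2⟩, hB.2⟩⟩

lemma rel_isLTL (φ : CLTL AP) (h : φ.noRgt) (m : ℕ) : (rel m φ).isLTL := by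
  induction φ with
  | pos a => exact ⟨trivial, trivial⟩
  | neg a => exact ⟨trivial, trivial⟩
  | disj φ ψ ihφ ihψ =>
      exact ⟨⟨(ihφ h.1).1, (ihψ h.2).1⟩, ⟨(ihφ h.1).2, (ihψ h.2).2⟩⟩
  | conj φ ψ ihφ ihψ =>
      exact ⟨⟨(ihφ h.1).1, (ihψ h.2).1⟩, ⟨(ihφ h.1).2, (ihψ h.2).2⟩⟩
  | untl φ ψ ihφ ihψ =>
      exact ⟨⟨(ihφ h.1).1, (ihψ h.2).1⟩, ⟨(ihφ h.1).2, (ihψ h.2).2⟩⟩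
  | rels φ ψ ihφ ihψ =>
      exact ⟨⟨(ihφ h.1).1, (ihψ h.2).1⟩, ⟨(ihφ h.1).2, (ihψ h.2).2⟩⟩
  | next φ ihφ => exact ⟨(ihφ h).1, (ihφ h).2⟩
  | uleq φ ψ ihφ ihψ => exact unfoldU_isLTL _ _ (ihφ h.1) (ihψ h.2) m
  | rgt φ ψ ihφ ihψ => exact absurd h (by simp [noRgt])

lemma negate_isLTL (φ : CLTL AP) (h : φ.isLTL) : φ.negate.isLTL :=
  ⟨negate_noRgt φ h.2, negate_noUleq φ h.1⟩

lemma card_filter_range_add (P : ℕ → Prop) [DecidablePred P] (a b : ℕ) :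
    ((Finset.range (a + b)).filter P).card =
      ((Finset.range a).filter P).card +
        ((Finset.range b).filter (fun l => P (a + l))).card := by
  rw [Finset.range_add, Finset.filter_union]
  rw [Finset.card_union_of_disjoint]
  · congr 1
    rw [Finset.filter_map, Finset.card_map]
    congr 1
  · rw [Finset.disjoint_left]
    intro x hx hx'
    simp only [Finset.mem_filter, Finset.mem_range] at hx
    simp only [Finset.mem_filter, Finset.mem_map, addLeftEmbedding_apply] at hx'
    obtain ⟨⟨l, _, hl⟩, _⟩ := hx'
    omega

lemma sat_unfoldU (A B : CLTL AP) (p : ℕ) : ∀ (k : ℕ) (u : ℕ → Set AP),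
    (unfoldU A B k).sat u p ↔ ∃ i, B.sat (shift u i) p ∧
      ((Finset.range i).filter (fun j => ¬ A.sat (shift u j) p)).card ≤ k := by
  intro k
  induction k with
  | zero =>
      intro u
      simp only [unfoldU, sat, Nat.le_zero, Finset.card_eq_zero,
        Finset.filter_eq_empty_iff, Finset.mem_range, not_not]
  | succ k ih =>
      intro u
      simp only [unfoldU, sat]
      constructor
      · rintro ⟨i, hi, hall⟩
        by_cases hA : ∀ j < i, A.sat (shift u j) p
        · exact ⟨i, hi, by
            have : (Finset.range i).filter (fun j => ¬ A.sat (shift u j) p) = ∅ := by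
              rw [Finset.filter_eq_empty_iff]
              intro j hj
              simp only [not_not]
              exact hA j (Finset.mem_range.mp hj)
            simp [this]⟩
        · push_neg at hA
          have hex : ∃ j, j < i ∧ ¬ A.sat (shift u j) p := hA
          set j := Nat.find hex with hjdef
          obtain ⟨hji, hjb⟩ : j < i ∧ ¬ A.sat (shift u j) p := Nat.find_spec hex
          have hmin : ∀ q < j, ¬ (q < i ∧ ¬ A.sat (shift u q) p) :=
            fun q hq => Nat.find_min hex hq
          rcases hall j hji with hAj | hU
          · exact absurd hAj hjb
          · rw [shift_shift] at hU
            obtain ⟨i', hi', hc'⟩ := (ih _).mp hU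
            refine ⟨j + 1 + i', by rwa [shift_shift] at hi', ?_⟩
            rw [card_filter_range_add]
            have h1 : ((Finset.range (j + 1)).filter
                (fun q => ¬ A.sat (shift u q) p)).card ≤ 1 := by
              refine le_trans (Finset.card_le_card ?_) (by simp : ({j} : Finset ℕ).card ≤ 1)
              intro q hq
              simp only [Finset.mem_filter, Finset.mem_range] at hq
              simp only [Finset.mem_singleton]
              by_contra hne
              have hqj : q < j := by omega
              exact (hmin q hqj) ⟨by omega, hq.2⟩
            have h2 : ((Finset.range i').filter
                (fun l => ¬ A.sat (shift u (j + 1 + l)) p)).card ≤ k := by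
              refine le_trans (le_of_eq ?_) hc'
              congr 1
              apply Finset.filter_congr
              intro l _
              rw [shift_shift]
            omega
      · rintro ⟨i, hi, hc⟩
        refine ⟨i, hi, ?_⟩
        intro j hj
        by_cases hA : A.sat (shift u j) p
        · exact Or.inl hA
        · right
          rw [shift_shift, ih]
          refine ⟨i - (j + 1), ?_, ?_⟩
          · rw [shift_shift]
            have : j + 1 + (i - (j + 1)) = i := by omega
            rwa [this]
          · have hsplit := card_filter_range_add (fun q => ¬ A.sat (shift u q) p) (j + 1) (i - (j + 1))
            have heq : j + 1 + (i - (j + 1)) = i := by omega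
            rw [heq] at hsplit
            have h1 : 1 ≤ ((Finset.range (j + 1)).filter
                (fun q => ¬ A.sat (shift u q) p)).card := by
              rw [Nat.one_le_iff_ne_zero, ← Nat.pos_iff_ne_zero, Finset.card_pos]
              exact ⟨j, Finset.mem_filter.mpr ⟨Finset.mem_range.mpr (by omega), hA⟩⟩
            have h2 : ((Finset.range (i - (j + 1))).filter
                (fun l => ¬ A.sat (shift (shift u (j + 1)) l) p)).card =
                ((Finset.range (i - (j + 1))).filter
                (fun l => ¬ A.sat (shift u (j + 1 + l)) p)).card := by
              congr 1
              apply Finset.filter_congr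
              intro l _
              rw [shift_shift]
            rw [h2]
            omega

lemma sat_rel (φ : CLTL AP) (h : φ.noRgt) (m : ℕ) : ∀ u p, (rel m φ).sat u p ↔ φ.sat u m := by
  induction φ with
  | pos a => intro u p; simp [rel, sat]
  | neg a => intro u p; simp [rel, sat]
  | disj φ ψ ihφ ihψ => intro u p; simp [rel, sat, ihφ h.1, ihψ h.2]
  | conj φ ψ ihφ ihψ => intro u p; simp [rel, sat, ihφ h.1, ihψ h.2]
  | untl φ ψ ihφ ihψ => intro u p; simp [rel, sat, ihφ h.1, ihψ h.2]
  | rels φ ψ ihφ ihψ => intro u p; simp [rel, sat, ihφ h.1, ihψ h.2]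
  | next φ ihφ => intro u p; simp [rel, sat, ihφ h]
  | uleq φ ψ ihφ ihψ =>
      intro u p
      rw [show rel m (uleq φ ψ) = unfoldU (rel m φ) (rel m ψ) m from rfl, sat_unfoldU]
      simp only [sat]
      constructor
      · rintro ⟨i, hi, hc⟩
        refine ⟨i, (ihψ h.2 _ p).mp hi, le_trans (le_of_eq ?_) hc⟩
        congr 1
        apply Finset.filter_congr
        intro l _
        rw [ihφ h.1]
      · rintro ⟨i, hi, hc⟩
        refine ⟨i, (ihψ h.2 _ p).mpr hi, le_trans (le_of_eq ?_) hc⟩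
        congr 1
        apply Finset.filter_congr
        intro l _
        rw [ihφ h.1]
  | rgt φ ψ ihφ ihψ => exact absurd h (by simp [noRgt])

lemma sat_relGt (φ : CLTL AP) (h : φ.noUleq) (m : ℕ) (u : ℕ → Set AP) (p : ℕ) :
    (relGt m φ).sat u p ↔ φ.sat u m := by
  rw [relGt, sat_negate, sat_rel _ (negate_noRgt φ h), sat_negate, not_not]

lemma semSup_gt_iff (φ : CLTL AP) (u : ℕ → Set AP) (k : ℕ∞) :
    k < φ.semSup u ↔ ∃ m : ℕ, k < (m : ℕ∞) ∧ φ.sat u m := by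
  rw [semSup, lt_iff_not_ge ]
  constructor
  · intro h
    by_contra hc; push_neg at hc
    apply h
    apply sSup_le
    rintro b ⟨m, rfl, hm⟩
    by_contra hb
    exact absurd hm (hc m (lt_of_not_ge hb)).elim
  · rintro ⟨m, hm, hs⟩ hle
    have hmem : (m : ℕ∞) ∈ {b : ℕ∞ | ∃ n : ℕ, b = (n : ℕ∞) ∧ φ.sat u n} := ⟨m, rfl, hs⟩
    exact absurd (le_trans (le_sSup hmem) hle) (not_le.mpr hm)

lemma sat_succ_iff (φ : CLTL AP) (h : φ.noUleq) (u : ℕ → Set AP) (n : ℕ) :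
    φ.sat u (n + 1) ↔ (n : ℕ∞) < φ.semSup u := by
  rw [semSup_gt_iff]
  constructor
  · intro hs
    exact ⟨n + 1, by exact_mod_cast Nat.lt_succ_self n, hs⟩
  · rintro ⟨m, hm, hs⟩
    have : n + 1 ≤ m := by exact_mod_cast hm
    exact sat_antitone φ h u (n + 1) m this hs

lemma semSup_conj_le (φ ψ : CLTL AP) (u : ℕ → Set AP) :
    (conj φ ψ).semSup u ≤ φ.semSup u := by
  apply sSup_le
  rintro b ⟨m, rfl, hm⟩
  exact le_sSup ⟨m, rfl, hm.1⟩

lemma semSup_conj_relGt (φ : CLTL AP) (h : φ.noUleq) (n : ℕ) (u : ℕ → Set AP)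
    (hs : φ.sat u (n + 1)) :
    (conj φ (φ.relGt (n + 1))).semSup u = φ.semSup u := by
  unfold semSup
  congr 1
  ext b
  constructor
  · rintro ⟨m, rfl, hm⟩
    exact ⟨m, rfl, hm.1⟩
  · rintro ⟨m, rfl, hm⟩
    exact ⟨m, rfl, hm, (sat_relGt φ h (n + 1) u m).mpr hs⟩

end CLTL

/-- the CEGAR refinement step: if `sup_L ⟦φ₀⟧_sup` is finite and
`n < sup_L ⟦φ₀⟧_sup`, then `⟦φ₀ ∧ φ₀[n+1]⟧_sup` refines `⟦φ₀⟧_sup` relative to `L`. -/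
theorem cegar_refinement_step {AP : Type} (φ₀ : CLTL AP) (hφ₀ : φ₀.noUleq)
    (L : Set (ℕ → Set AP)) (n : ℕ)
    (hfin : sSup (φ₀.semSup '' L) ≠ ⊤)
    (hn : (n : ℕ∞) < sSup (φ₀.semSup '' L)) :
    sSup ((CLTL.conj φ₀ (φ₀.relGt (n + 1))).semSup '' L) = sSup (φ₀.semSup '' L) ∧
    ∀ u ∈ L, φ₀.semSup u = 0 → (CLTL.conj φ₀ (φ₀.relGt (n + 1))).semSup u = 0 := by
  constructor
  · apply le_antisymm
    · apply sSup_le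
      rintro b ⟨u, hu, rfl⟩
      exact le_trans (CLTL.semSup_conj_le _ _ u) (le_sSup ⟨u, hu, rfl⟩)
    · by_contra hc
      push_neg at hc
      set T := sSup ((CLTL.conj φ₀ (φ₀.relGt (n + 1))).semSup '' L) with hT
      have hk : max T (n : ℕ∞) < sSup (φ₀.semSup '' L) := max_lt hc hn
      have hk' : ¬ ∀ b ∈ φ₀.semSup '' L, b ≤ max T (n : ℕ∞) := by
        intro hall
        exact absurd (sSup_le hall) (not_le.mpr hk)
      push_neg at hk'
      obtain ⟨b, ⟨u, hu, rfl⟩, hb'⟩ := hk'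
      have hb : max T (n : ℕ∞) < φ₀.semSup u := hb'
      have hgtn : (n : ℕ∞) < φ₀.semSup u := lt_of_le_of_lt (le_max_right _ _) hb
      have hsat : φ₀.sat u (n + 1) := (CLTL.sat_succ_iff φ₀ hφ₀ u n).mpr hgtn
      have heq := CLTL.semSup_conj_relGt φ₀ hφ₀ n u hsat
      have hle : (CLTL.conj φ₀ (φ₀.relGt (n + 1))).semSup u ≤ T :=
        le_sSup ⟨u, hu, rfl⟩
      rw [heq] at hle
      exact absurd (lt_of_le_of_lt (le_max_left _ _) hb) (not_lt.mpr hle)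
  · intro u hu h0
    have hle := CLTL.semSup_conj_le φ₀ (φ₀.relGt (n + 1)) u
    rw [h0] at hle
    exact le_antisymm hle (by simp)
end
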